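/- Let E be a field, V a finite-dimensional E-vector space, γ ∈ End_E(V), and suppose the minimal polynomial of γ is ℘^m for a monic irreducible ℘ ∈ E[T]. For j ≥ 1 define Fil^j V := Σ_{k≥1} (ker(℘(γ)^k) ∩ im(℘(γ)^{k+j-1})). Then (Fil^j V)_{j≥1} is a decreasing filtration of V: Fil^1 V ⊇ Fil^2 V ⊇ ⋯, each Fil^j V is γ-stable, and Fil^j V = 0 for j ≥ m. -/
import Mathlib


open Polynomial

/-- For an endomorphism `γ` with minimal polynomial `℘^m`, the filtration
`Fil^j V = Σ_{k ≥ 1} (ker ℘(γ)^k ∩ im ℘(γ)^{k+j-1})` is decreasing, `γ`-stable,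
and vanishes for `j ≥ m`. -/
theorem filtration_of_primary_endomorphism
    {E V : Type*} [Field E] [AddCommGroup V] [Module E V] [FiniteDimensional E V]
    (℘ : Polynomial E) (hmon : ℘.Monic) (hirr : Irreducible ℘)
    (γ : Module.End E V) (mexp : ℕ) (hmin : minpoly E γ = ℘ ^ mexp)
    (Fil : ℕ → Submodule E V)
    (hFil : ∀ j, Fil j = ⨆ k : ℕ, ⨆ _ : 1 ≤ k,
      LinearMap.ker ((Polynomial.aeval γ ℘) ^ k) ⊓
        LinearMap.range ((Polynomial.aeval γ ℘) ^ (k + j - 1))) :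
    (∀ j, 1 ≤ j → Fil (j + 1) ≤ Fil j) ∧
    (∀ j, 1 ≤ j → ∀ v ∈ Fil j, γ v ∈ Fil j) ∧
    (∀ j, mexp ≤ j → Fil j = ⊥) := by
  set P : Module.End E V := Polynomial.aeval γ ℘ with hP
  have hP0 : P ^ mexp = 0 := by
    rw [hP, ← map_pow, ← hmin]; exact minpoly.aeval E γ
  have hc : Commute γ P := by
    have h1 : γ * P = Polynomial.aeval γ (X * ℘) := by rw [map_mul, aeval_X, hP]
    have h2 : P * γ = Polynomial.aeval γ (℘ * X) := by rw [map_mul, aeval_X, hP]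
    show γ * P = P * γ
    rw [h1, h2, mul_comm]
  refine ⟨?_, ?_, ?_⟩
  · intro j hj
    rw [hFil, hFil]
    refine iSup_le fun k => iSup_le fun hk => ?_
    refine le_trans ?_ (le_iSup₂ (f := fun k (_ : 1 ≤ k) => LinearMap.ker (P ^ k) ⊓ LinearMap.range (P ^ (k + j - 1))) k hk)
    refine inf_le_inf le_rfl ?_
    have he : k + (j + 1) - 1 = (k + j - 1) + 1 := by omega
    rw [he, pow_succ, Module.End.mul_eq_comp]
    exact LinearMap.range_comp_le_range _ _
  · intro j hj v hv
    rw [hFil] at hv ⊢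
    have key : ∀ k : ℕ, 1 ≤ k →
        (LinearMap.ker (P ^ k) ⊓ LinearMap.range (P ^ (k + j - 1))) ≤
        Submodule.comap γ (⨆ k : ℕ, ⨆ _ : 1 ≤ k,
          LinearMap.ker (P ^ k) ⊓ LinearMap.range (P ^ (k + j - 1))) := by
      intro k hk x hx
      obtain ⟨hx1, w, hw⟩ := hx
      refine Submodule.mem_iSup_of_mem k (Submodule.mem_iSup_of_mem hk ⟨?_, γ w, ?_⟩)
      · show (P ^ k) (γ x) = 0
        have : (P ^ k) * γ = γ * (P ^ k) := ((hc.pow_right k).symm)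
        calc (P ^ k) (γ x) = ((P ^ k) * γ) x := rfl
          _ = (γ * (P ^ k)) x := by rw [this]
          _ = γ ((P ^ k) x) := rfl
          _ = 0 := by rw [hx1]; simp
      · have : (P ^ (k + j - 1)) * γ = γ * (P ^ (k + j - 1)) :=
          ((hc.pow_right (k + j - 1)).symm)
        calc (P ^ (k + j - 1)) (γ w) = ((P ^ (k + j - 1)) * γ) w := rfl
          _ = γ ((P ^ (k + j - 1)) w) := by rw [this]; rfl
          _ = γ x := by rw [hw]
    have := iSup_le fun k => iSup_le fun hk => key k hk
    exact this hv
  · intro j hj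
    rw [hFil]
    refine le_bot_iff.mp (iSup_le fun k => iSup_le fun hk => ?_)
    have hz : P ^ (k + j - 1) = 0 := by
      have h1 : k + j - 1 = (k + j - 1 - mexp) + mexp := by omega
      rw [h1, pow_add, hP0, mul_zero]
    rw [hz]
    exact le_trans inf_le_right (by rw [LinearMap.range_zero])
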